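/- Let G be a connected (2K_2, claw)-free simple graph and let C = {p, q, r, s} ⊆ V(G) be a vertex set inducing a 4-cycle in G with edges pq, qr, rs, sp. Then C is a dominating set of G. -/

import Mathlib

open SimpleGraph

/-- Contraction of the edge between adjacent vertices `u` and `v`:
`v` is merged into `u`, so the vertex set is `V \ {v}`, and `u` inherits
the neighbours of `v`; loops and multiple edges are removed. -/
def SimpleGraph.contractEdge {V : Type*} (G : SimpleGraph V) (u v : V) :
    SimpleGraph {x : V // x ≠ v} where
  Adj a b := a ≠ b ∧
    (G.Adj a.1 b.1 ∨ (a.1 = u ∧ G.Adj v b.1) ∨ (b.1 = u ∧ G.Adj v a.1))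
  symm := by
    constructor
    rintro a b ⟨hab, h⟩
    refine ⟨hab.symm, ?_⟩
    rcases h with h | ⟨h1, h2⟩ | ⟨h1, h2⟩
    · exact Or.inl h.symm
    · exact Or.inr (Or.inr ⟨h1, h2⟩)
    · exact Or.inr (Or.inl ⟨h1, h2⟩)
  loopless := by constructor; rintro a ⟨hab, -⟩; exact hab rfl

/-- `G` contains an induced subgraph isomorphic to `H`. -/
def SimpleGraph.HasInduced {V W : Type*} (G : SimpleGraph V) (H : SimpleGraph W) : Prop :=
  ∃ S : Set V, Nonempty (G.induce S ≃g H)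

/-- A set of vertices is independent if its vertices are pairwise nonadjacent. -/
def SimpleGraph.IsIndependentSet {V : Type*} (G : SimpleGraph V) (S : Set V) : Prop :=
  S.Pairwise fun a b => ¬ G.Adj a b

/-- A set `C` is dominating if every vertex is in `C` or adjacent to a vertex of `C`. -/
def SimpleGraph.IsDominating {V : Type*} (G : SimpleGraph V) (C : Set V) : Prop :=
  ∀ w, w ∈ C ∨ ∃ x ∈ C, G.Adj x w

/-- `2K₂`: two disjoint edges. -/
def twoK2 : SimpleGraph (Fin 4) := fromEdgeSet {s(0,1), s(2,3)}

/-- The claw `K_{1,3}`. -/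
def clawGraph : SimpleGraph (Fin 4) := fromEdgeSet {s(0,1), s(0,2), s(0,3)}

lemma aux_hasInduced {V : Type*} (G : SimpleGraph V) (H : SimpleGraph (Fin 4)) (f : Fin 4 → V)
    (hinj : Function.Injective f) (h : ∀ i j, H.Adj i j ↔ G.Adj (f i) (f j)) :
    G.HasInduced H := by
  refine ⟨Set.range f, ⟨⟨(Equiv.ofInjective f hinj).symm, ?_⟩⟩⟩
  intro a b
  rw [h]
  simp [Equiv.apply_ofInjective_symm, SimpleGraph.comap_adj]

lemma aux_has2K2 {V : Type*} (G : SimpleGraph V) (a b c d : V)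
    (hab : G.Adj a b) (hcd : G.Adj c d)
    (hac : ¬ G.Adj a c) (had : ¬ G.Adj a d) (hbc : ¬ G.Adj b c) (hbd : ¬ G.Adj b d)
    (nac : a ≠ c) (nad : a ≠ d) (nbc : b ≠ c) (nbd : b ≠ d) :
    G.HasInduced twoK2 := by
  have nab := hab.ne
  have ncd := hcd.ne
  apply aux_hasInduced G twoK2 ![a, b, c, d]
  · intro i j hij
    fin_cases i <;> fin_cases j <;> simp_all
  · intro i j
    have sab := hab.symm
    have scd := hcd.symm
    have sac : ¬ G.Adj c a := fun h => hac h.symm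
    have sad : ¬ G.Adj d a := fun h => had h.symm
    have sbc : ¬ G.Adj c b := fun h => hbc h.symm
    have sbd : ¬ G.Adj d b := fun h => hbd h.symm
    fin_cases i <;> fin_cases j <;> simp [twoK2] <;> simp_all

lemma aux_hasClaw {V : Type*} (G : SimpleGraph V) (x a b c : V)
    (hxa : G.Adj x a) (hxb : G.Adj x b) (hxc : G.Adj x c)
    (hab : ¬ G.Adj a b) (hac : ¬ G.Adj a c) (hbc : ¬ G.Adj b c)
    (nab : a ≠ b) (nac : a ≠ c) (nbc : b ≠ c) :
    G.HasInduced clawGraph := by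
  have nxa := hxa.ne
  have nxb := hxb.ne
  have nxc := hxc.ne
  apply aux_hasInduced G clawGraph ![x, a, b, c]
  · intro i j hij
    fin_cases i <;> fin_cases j <;> simp_all
  · intro i j
    have sxa := hxa.symm
    have sxb := hxb.symm
    have sxc := hxc.symm
    have sab : ¬ G.Adj b a := fun h => hab h.symm
    have sac : ¬ G.Adj c a := fun h => hac h.symm
    have sbc : ¬ G.Adj c b := fun h => hbc h.symm
    fin_cases i <;> fin_cases j <;> simp [clawGraph] <;> simp_all

/-- Claim 12.8. In a connected `(2K₂, claw)`-free graph, the vertex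
set of any induced 4-cycle `p-q-r-s` is dominating. -/
theorem stmt14 {V : Type*} [Fintype V] [DecidableEq V] (G : SimpleGraph V)
    (hG : G.Connected) (h2K2 : ¬ G.HasInduced twoK2) (hclaw : ¬ G.HasInduced clawGraph)
    (p q r s : V) (hdist : [p, q, r, s].Nodup)
    (hpq : G.Adj p q) (hqr : G.Adj q r) (hrs : G.Adj r s) (hsp : G.Adj s p)
    (hpr : ¬ G.Adj p r) (hqs : ¬ G.Adj q s) :
    G.IsDominating {p, q, r, s} := by
  intro w
  by_cases hwC : w ∈ ({p, q, r, s} : Set V)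
  · exact Or.inl hwC
  by_cases hdom : ∃ x ∈ ({p, q, r, s} : Set V), G.Adj x w
  · exact Or.inr hdom
  exfalso
  push_neg at hdom
  simp only [Set.mem_insert_iff, Set.mem_singleton_iff] at hwC hdom
  push_neg at hwC
  obtain ⟨nwp, nwq, nwr, nws⟩ := hwC
  have hwp := hdom p (Or.inl rfl)
  have hwq := hdom q (Or.inr (Or.inl rfl))
  have hwr := hdom r (Or.inr (Or.inr (Or.inl rfl)))
  have hws := hdom s (Or.inr (Or.inr (Or.inr rfl)))
  -- w has a neighbour x
  obtain ⟨W⟩ := hG.preconnected w p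
  obtain ⟨x, hwx⟩ : ∃ x, G.Adj w x := by
    cases W with
    | nil => exact absurd rfl nwp
    | cons h _ => exact ⟨_, h⟩
  -- x is not in C
  have nxp : x ≠ p := fun h => hwp (h ▸ hwx.symm)
  have nxq : x ≠ q := fun h => hwq (h ▸ hwx.symm)
  have nxr : x ≠ r := fun h => hwr (h ▸ hwx.symm)
  have nxs : x ≠ s := fun h => hws (h ▸ hwx.symm)
  simp only [List.nodup_cons, List.mem_cons, List.not_mem_nil, or_false,
    List.mem_singleton, List.nodup_nil, and_true] at hdist
  push_neg at hdist
  obtain ⟨⟨npq, npr, nps⟩, ⟨nqr, nqs'⟩, nrs⟩ := hdist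
  -- for each cycle edge a-b, x is adjacent to a or b
  have key : ∀ a b : V, G.Adj a b → ¬ G.Adj a w → ¬ G.Adj b w → w ≠ a → w ≠ b →
      x ≠ a → x ≠ b → G.Adj x a ∨ G.Adj x b := by
    intro a b hab hwa hwb nwa nwb nxa nxb
    by_contra hcon
    push_neg at hcon
    exact h2K2 (aux_has2K2 G w x a b hwx hab
      (fun h => hwa h.symm) (fun h => hwb h.symm)
      hcon.1 hcon.2 nwa nwb nxa nxb)
  have k1 := key p q hpq hwp hwq nwp nwq nxp nxq
  have k2 := key q r hqr hwq hwr nwq nwr nxq nxr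
  have k3 := key r s hrs hwr hws nwr nws nxr nxs
  have k4 := key s p hsp hws hwp nws nwp nxs nxp
  have hopp : (G.Adj x p ∧ G.Adj x r) ∨ (G.Adj x q ∧ G.Adj x s) := by tauto
  have hxw := hwx.symm
  rcases hopp with ⟨h1, h2⟩ | ⟨h1, h2⟩
  · exact hclaw (aux_hasClaw G x w p r hxw h1 h2
      (fun h => hwp h.symm) (fun h => hwr h.symm) hpr nwp nwr npr)
  · exact hclaw (aux_hasClaw G x w q s hxw h1 h2
      (fun h => hwq h.symm) (fun h => hws h.symm) hqs nwq nws nqs')
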